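/- Combinatorial mutations preserve the number of boundary lattice points of dilates of the dual: with Q := mut_w(P,F), for every positive integer k one has |∂(kP*) ∩ M| = |∂(kQ*) ∩ M|. -/

import Mathlib

open Set Pointwise

noncomputable section

def pairing {n : ℕ} (w : Fin n → ℤ) (x : Fin n → ℚ) : ℚ :=
  ∑ i, (w i : ℚ) * x i

def IsLatticePt {n : ℕ} (x : Fin n → ℚ) : Prop := ∀ i, ∃ z : ℤ, x i = (z : ℚ)

def IsLatticePolytope {n : ℕ} (P : Set (Fin n → ℚ)) : Prop :=
  ∃ S : Finset (Fin n → ℚ), (∀ x ∈ S, IsLatticePt x) ∧ P = convexHull ℚ (S : Set (Fin n → ℚ))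

def IsPrimitive {n : ℕ} (w : Fin n → ℤ) : Prop := Finset.univ.gcd w = 1

def wSlice {n : ℕ} (w : Fin n → ℤ) (h : ℤ) (P : Set (Fin n → ℚ)) : Set (Fin n → ℚ) :=
  convexHull ℚ {x | x ∈ P ∧ IsLatticePt x ∧ pairing w x = (h : ℚ)}

def mutation {n : ℕ} (w : Fin n → ℤ) (P F : Set (Fin n → ℚ)) (G : ℤ → Set (Fin n → ℚ)) :
    Set (Fin n → ℚ) :=
  convexHull ℚ ((⋃ h : ℤ, ⋃ _ : h < 0, G h) ∪
    ⋃ h : ℤ, ⋃ _ : 0 ≤ h, (wSlice w h P + (h : ℚ) • F))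

def IsMutData {n : ℕ} (w : Fin n → ℤ) (P F : Set (Fin n → ℚ))
    (G : ℤ → Set (Fin n → ℚ)) : Prop :=
  IsLatticePolytope F ∧ F.Nonempty ∧ (∀ x ∈ F, pairing w x = 0) ∧
  ∀ h : ℤ, h < 0 →
    (G h = ∅ ∨ IsLatticePolytope (G h)) ∧
    {v | v ∈ P.extremePoints ℚ ∧ pairing w v = (h : ℚ)} ⊆ G h + (-(h : ℚ)) • F ∧
    G h + (-(h : ℚ)) • F ⊆ wSlice w h P

def dpair {n : ℕ} (u v : Fin n → ℚ) : ℚ := ∑ i, u i * v i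

def dualP {n : ℕ} (P : Set (Fin n → ℚ)) : Set (Fin n → ℚ) := {u | ∀ v ∈ P, -1 ≤ dpair u v}

section MutAux

variable {n : ℕ}


lemma mutaux_dpair_linear (u : Fin n → ℚ) : IsLinearMap ℚ (fun v => dpair u v) := by
  constructor
  · intro x y
    simp only [dpair, Pi.add_apply, mul_add, Finset.sum_add_distrib]
  · intro c x
    simp only [dpair, Pi.smul_apply, smul_eq_mul, Finset.mul_sum]
    congr 1; ext i; ring

lemma mutaux_dpair_add_right (u x y : Fin n → ℚ) : dpair u (x + y) = dpair u x + dpair u y :=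
  (mutaux_dpair_linear u).map_add x y

lemma mutaux_dpair_smul_right (u : Fin n → ℚ) (c : ℚ) (x : Fin n → ℚ) :
    dpair u (c • x) = c * dpair u x := (mutaux_dpair_linear u).map_smul c x

lemma mutaux_dpair_comm (u v : Fin n → ℚ) : dpair u v = dpair v u := by
  simp only [dpair]; congr 1; ext i; ring

lemma mutaux_dpair_add_left (u v x : Fin n → ℚ) : dpair (u + v) x = dpair u x + dpair v x := by
  rw [mutaux_dpair_comm, mutaux_dpair_add_right, mutaux_dpair_comm x u, mutaux_dpair_comm x v]

lemma mutaux_dpair_sub_left (u v x : Fin n → ℚ) : dpair (u - v) x = dpair u x - dpair v x := by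
  have := mutaux_dpair_add_left (u - v) v x
  rw [sub_add_cancel] at this
  linarith

lemma mutaux_dpair_smul_left (c : ℚ) (u x : Fin n → ℚ) : dpair (c • u) x = c * dpair u x := by
  rw [mutaux_dpair_comm, mutaux_dpair_smul_right, mutaux_dpair_comm]

lemma mutaux_dpair_castw (w : Fin n → ℤ) (x : Fin n → ℚ) :
    dpair (fun i => (w i : ℚ)) x = pairing w x := rfl

lemma mutaux_pairing_linear (w : Fin n → ℤ) : IsLinearMap ℚ (pairing w) := by
  rw [← funext (mutaux_dpair_castw w)]
  exact mutaux_dpair_linear _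

lemma mutaux_dpair_castw_right (w : Fin n → ℤ) (x : Fin n → ℚ) :
    dpair x (fun i => (w i : ℚ)) = pairing w x := by
  rw [mutaux_dpair_comm, mutaux_dpair_castw]

lemma mutaux_dpair_int (u : Fin n → ℚ) (v : Fin n → ℚ) (hu : IsLatticePt u)
    (hv : IsLatticePt v) : ∃ z : ℤ, dpair u v = (z : ℚ) := by
  choose a ha using hu
  choose b hb using hv
  refine ⟨∑ i, a i * b i, ?_⟩
  simp only [dpair]
  push_cast
  exact Finset.sum_congr rfl fun i _ => by rw [ha i, hb i]

lemma mutaux_pairing_int (w : Fin n → ℤ) (v : Fin n → ℚ) (hv : IsLatticePt v) :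
    ∃ z : ℤ, pairing w v = (z : ℚ) := by
  rw [← mutaux_dpair_castw]
  exact mutaux_dpair_int _ v (fun i => ⟨w i, rfl⟩) hv

lemma mutaux_continuous_dpair (s : Fin n → ℚ) : Continuous (fun u : Fin n → ℚ => dpair u s) := by
  refine continuous_finset_sum _ fun i _ => ?_
  exact (continuous_apply i).mul continuous_const

lemma mutaux_continuous_inf' {ι : Type*} [DecidableEq ι] (S : Finset ι) (hS : S.Nonempty)
    (f : ι → (Fin n → ℚ) → ℚ) (hf : ∀ i, Continuous (f i)) :
    Continuous fun u => S.inf' hS (fun i => f i u) := by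
  induction S using Finset.cons_induction with
  | empty => simp at hS
  | cons a S ha ih =>
    rcases S.eq_empty_or_nonempty with rfl | hS'
    · simpa using hf a
    · have heq : (fun u => (Finset.cons a S ha).inf' hS fun i => f i u)
          = fun u => min (f a u) (S.inf' hS' fun i => f i u) := by
        funext u
        rw [Finset.inf'_cons]
      rw [heq]
      exact (hf a).min (ih hS')


lemma mutaux_mem_erase_hull (S : Finset (Fin n → ℚ)) (x : Fin n → ℚ) (hxS : x ∈ S)
    (hx : x ∉ (convexHull ℚ (S : Set (Fin n → ℚ))).extremePoints ℚ) :
    x ∈ convexHull ℚ ((S.erase x : Finset (Fin n → ℚ)) : Set (Fin n → ℚ)) := by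
  classical
  rw [mem_extremePoints] at hx
  push_neg at hx
  have hxc : x ∈ convexHull ℚ (S : Set (Fin n → ℚ)) := subset_convexHull ℚ _ hxS
  obtain ⟨y, hy, z, hz, hseg, hne⟩ := hx hxc
  obtain ⟨a, b, ha, hb, hab, hxyz⟩ := hseg
  have hyx : y ≠ x := by
    rintro rfl
    apply hne rfl
    have : b • z = b • y := by
      have h1 : a • y + b • z = y := hxyz
      have : b • z = (1 - a) • y := by
        rw [sub_smul, one_smul]
        abel_nf
        linear_combination (norm := module) h1
      rw [this, show (1:ℚ) - a = b by linarith]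
    have h2 := smul_right_injective (Fin n → ℚ) (ne_of_gt hb) this
    first | exact h2 | exact h2.symm
  have hzx : z ≠ x := by
    rintro rfl
    apply absurd ?_ hyx
    have : a • y = (1 - b) • z := by
      rw [sub_smul, one_smul]
      linear_combination (norm := module) hxyz
    rw [show (1:ℚ) - b = a by linarith] at this
    exact smul_right_injective _ (ne_of_gt ha) this
  rw [Finset.convexHull_eq] at hy hz ⊢
  obtain ⟨cy, hcy0, hcy1, hcyc⟩ := hy
  obtain ⟨cz, hcz0, hcz1, hczc⟩ := hz
  have hysum : ∑ v ∈ S, cy v • v = y := by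
    rw [← Finset.centerMass_eq_of_sum_1 _ _ hcy1]; exact hcyc
  have hzsum : ∑ v ∈ S, cz v • v = z := by
    rw [← Finset.centerMass_eq_of_sum_1 _ _ hcz1]; exact hczc
  set c : (Fin n → ℚ) → ℚ := fun v => a * cy v + b * cz v with hc
  have hc0 : ∀ v ∈ S, 0 ≤ c v := fun v hv => by
    have := hcy0 v hv; have := hcz0 v hv; positivity
  have hc1 : ∑ v ∈ S, c v = 1 := by
    simp only [hc, Finset.sum_add_distrib, ← Finset.mul_sum, hcy1, hcz1]; linarith
  have hcsum : ∑ v ∈ S, c v • v = x := by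
    simp only [hc, add_smul, mul_smul, Finset.sum_add_distrib, ← Finset.smul_sum, hysum, hzsum,
      hxyz]
  have hcy_le : cy x ≤ 1 := by
    rw [← hcy1]
    exact Finset.single_le_sum (fun v hv => hcy0 v hv) hxS
  have hcz_le : cz x ≤ 1 := by
    rw [← hcz1]
    exact Finset.single_le_sum (fun v hv => hcz0 v hv) hxS
  have hcxlt : c x < 1 := by
    rcases lt_or_eq_of_le (show c x ≤ 1 from hc1 ▸ Finset.single_le_sum hc0 hxS) with h | h
    · exact h
    exfalso
    have hcy1' : cy x = 1 := by
      by_contra hne'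
      have hlt : cy x < 1 := lt_of_le_of_ne hcy_le hne'
      have h3 : a * cy x < a * 1 := by exact mul_lt_mul_of_pos_left hlt ha
      have h4 : b * cz x ≤ b * 1 := mul_le_mul_of_nonneg_left hcz_le hb.le
      have h5 : c x = a * cy x + b * cz x := rfl
      nlinarith
    apply hyx
    have hz0 : ∀ v ∈ S.erase x, cy v • v = 0 := by
      intro v hv
      have hsum0 : ∑ v ∈ S.erase x, cy v = 0 := by
        have := Finset.add_sum_erase S cy hxS
        rw [hcy1'] at this; linarith [hcy1, this.symm]
      have : cy v = 0 :=
        (Finset.sum_eq_zero_iff_of_nonneg (fun w hw => hcy0 w (Finset.mem_of_mem_erase hw))).mp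
          hsum0 v hv
      simp [this]
    calc y = ∑ v ∈ S, cy v • v := hysum.symm
    _ = cy x • x + ∑ v ∈ S.erase x, cy v • v := (Finset.add_sum_erase S (fun v => cy v • v) hxS).symm
    _ = x := by rw [Finset.sum_eq_zero hz0, hcy1']; simp
  set t : ℚ := 1 - c x with ht
  have ht0 : 0 < t := by linarith
  refine ⟨fun v => c v / t, fun v hv => div_nonneg (hc0 v (Finset.mem_of_mem_erase hv)) ht0.le,
    ?_, ?_⟩
  · rw [← Finset.sum_div]
    have : ∑ v ∈ S.erase x, c v = t := by
      have := Finset.add_sum_erase S c hxS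
      rw [hc1] at this; rw [ht]; linarith
    rw [this, div_self ht0.ne']
  · rw [Finset.centerMass_eq_of_sum_1]
    · simp only [id]
      have hsume : ∑ v ∈ S.erase x, c v • v = x - c x • x := by
        have := Finset.add_sum_erase S (fun v => c v • v) hxS
        rw [hcsum] at this
        linear_combination (norm := module) this
      calc ∑ v ∈ S.erase x, (c v / t) • v = t⁻¹ • ∑ v ∈ S.erase x, c v • v := by
            rw [Finset.smul_sum]; congr 1; ext v; rw [smul_smul, div_eq_inv_mul]
      _ = t⁻¹ • (t • x) := by rw [hsume]; congr 1; rw [ht, sub_smul, one_smul]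
      _ = x := by rw [smul_smul, inv_mul_cancel₀ ht0.ne', one_smul]
    · rw [← Finset.sum_div]
      have : ∑ v ∈ S.erase x, c v = t := by
        have := Finset.add_sum_erase S c hxS
        rw [hc1] at this; rw [ht]; linarith
      rw [this, div_self ht0.ne']

lemma mutaux_minkowski (S : Finset (Fin n → ℚ)) :
    convexHull ℚ (S : Set (Fin n → ℚ)) ⊆
      convexHull ℚ ((convexHull ℚ (S : Set (Fin n → ℚ))).extremePoints ℚ) := by
  classical
  induction S using Finset.strongInduction with
  | _ S ih =>
    by_cases hall : ∀ x ∈ S, x ∈ (convexHull ℚ (S : Set (Fin n → ℚ))).extremePoints ℚ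
    · exact convexHull_mono (fun x hx => hall x hx)
    · push_neg at hall
      obtain ⟨x, hxS, hx⟩ := hall
      have hx' := mutaux_mem_erase_hull S x hxS hx
      have heq : convexHull ℚ ((S : Set (Fin n → ℚ))) =
          convexHull ℚ ((S.erase x : Finset (Fin n → ℚ)) : Set (Fin n → ℚ)) := by
        apply le_antisymm
        · apply convexHull_min _ (convex_convexHull ℚ _)
          intro v hv
          rcases eq_or_ne v x with rfl | hvx
          · exact hx'
          · exact subset_convexHull ℚ _ (by
              simp only [Finset.coe_erase, Set.mem_diff, Set.mem_singleton_iff]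
              exact ⟨hv, hvx⟩)
        · exact convexHull_mono (by intro v hv; exact Finset.mem_of_mem_erase hv)
      rw [heq]
      refine (ih (S.erase x) (Finset.erase_ssubset hxS)).trans (convexHull_mono ?_)
      rw [← heq]

lemma mutaux_le_on_hull (S : Finset (Fin n → ℚ)) (f : (Fin n → ℚ) → ℚ)
    (hf : IsLinearMap ℚ f) (c : ℚ)
    (hext : ∀ v ∈ (convexHull ℚ (S : Set (Fin n → ℚ))).extremePoints ℚ, c ≤ f v) :
    ∀ v ∈ convexHull ℚ (S : Set (Fin n → ℚ)), c ≤ f v := fun v hv =>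
  convexHull_min hext (convex_halfSpace_ge hf c) (mutaux_minkowski S hv)

end MutAux

/-- Combinatorial mutations preserve the number of boundary lattice points of every dilate
of the dual polytope: `|∂(kP*) ∩ M| = |∂(kQ*) ∩ M|` for all `k ≥ 1`, where `Q = mut_w(P,F)`. -/
theorem mutation_preserves_dual_boundary_points {n : ℕ} (w : Fin n → ℤ)
    (P F : Set (Fin n → ℚ)) (G : ℤ → Set (Fin n → ℚ)) (hP : IsLatticePolytope P)
    (h0 : (0 : Fin n → ℚ) ∈ interior P) (hw : IsPrimitive w)
    (hdata : IsMutData w P F G) :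
    ∀ k : ℕ, 0 < k →
      Set.ncard {u : Fin n → ℤ | (fun i => (u i : ℚ)) ∈ frontier ((k : ℚ) • dualP P)} =
      Set.ncard {u : Fin n → ℤ |
        (fun i => (u i : ℚ)) ∈ frontier ((k : ℚ) • dualP (mutation w P F G))} := by
  classical
  intro k hk
  obtain ⟨SP, hSPlat, hSPeq⟩ := hP
  obtain ⟨⟨SF, hSFlat, hSFeq⟩, hFne, hF0, hneg⟩ := hdata
  set Q := mutation w P F G with hQ
  have hSFne : SF.Nonempty := by
    rw [hSFeq] at hFne
    rw [← Finset.coe_nonempty]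
    exact convexHull_nonempty_iff.mp hFne
  set cw : Fin n → ℚ := fun i => (w i : ℚ) with hcw
  set m : (Fin n → ℚ) → ℚ := fun u => SF.inf' hSFne (fun s => dpair u s) with hm
  -- basic properties of the piecewise linear data
  have hmle : ∀ u : Fin n → ℚ, ∀ f ∈ F, m u ≤ dpair u f := by
    intro u f hf
    rw [hSFeq] at hf
    refine convexHull_min ?_ (convex_halfSpace_ge (mutaux_dpair_linear u) (m u)) hf
    intro s hs
    show m u ≤ dpair u s
    rw [hm]
    exact Finset.inf'_le _ hs
  have hmmem : ∀ u : Fin n → ℚ, ∃ f, f ∈ F ∧ IsLatticePt f ∧ dpair u f = m u := by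
    intro u
    obtain ⟨s, hs, hseq⟩ := Finset.exists_mem_eq_inf' hSFne (fun s => dpair u s)
    exact ⟨s, hSFeq ▸ subset_convexHull ℚ _ hs, hSFlat s hs, hseq.symm⟩
  have hmshift : ∀ (u : Fin n → ℚ) (c : ℚ), m (u + c • cw) = m u := by
    intro u c
    show SF.inf' hSFne (fun s => dpair (u + c • cw) s) = SF.inf' hSFne (fun s => dpair u s)
    refine Finset.inf'_congr hSFne rfl ?_
    intro s hs
    have hsF : s ∈ F := hSFeq ▸ subset_convexHull ℚ _ hs
    rw [mutaux_dpair_add_left, mutaux_dpair_smul_left, hcw, mutaux_dpair_castw, hF0 s hsF]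
    ring
  have hmhom : ∀ (c : ℚ), 0 ≤ c → ∀ u, m (c • u) = c * m u := by
    intro c hc u
    apply le_antisymm
    · obtain ⟨f, hfF, _, hfeq⟩ := hmmem u
      calc m (c • u) ≤ dpair (c • u) f := hmle _ f hfF
      _ = c * m u := by rw [mutaux_dpair_smul_left, hfeq]
    · obtain ⟨f, hfF, _, hfeq⟩ := hmmem (c • u)
      calc c * m u ≤ c * dpair u f := mul_le_mul_of_nonneg_left (hmle u f hfF) hc
      _ = dpair (c • u) f := (mutaux_dpair_smul_left c u f).symm
      _ = m (c • u) := hfeq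
  set T : (Fin n → ℚ) → (Fin n → ℚ) := fun u => u - m u • cw with hT
  set T' : (Fin n → ℚ) → (Fin n → ℚ) := fun u => u + m u • cw with hT'
  have hmT : ∀ u, m (T u) = m u := by
    intro u
    have : T u = u + (-(m u)) • cw := by rw [hT]; module
    rw [this, hmshift]
  have hmT' : ∀ u, m (T' u) = m u := fun u => hmshift u (m u)
  have hTT' : ∀ u, T' (T u) = u := by
    intro u
    show T u + m (T u) • cw = u
    rw [hmT, hT]
    module
  have hT'T : ∀ u, T (T' u) = u := by
    intro u
    show T' u - m (T' u) • cw = u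
    rw [hmT', hT']
    module
  have hTval : ∀ u v, dpair (T u) v = dpair u v - m u * pairing w v := by
    intro u v
    show dpair (u - m u • cw) v = _
    rw [mutaux_dpair_sub_left, mutaux_dpair_smul_left, hcw, mutaux_dpair_castw]
  have hT'val : ∀ u v, dpair (T' u) v = dpair u v + m u * pairing w v := by
    intro u v
    show dpair (u + m u • cw) v = _
    rw [mutaux_dpair_add_left, mutaux_dpair_smul_left, hcw, mutaux_dpair_castw]
  -- geometry of P and its slices
  have hPconv : Convex ℚ P := hSPeq ▸ convex_convexHull ℚ _
  have hslice_sub : ∀ h : ℤ, wSlice w h P ⊆ P := fun h =>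
    convexHull_min (fun x hx => hx.1) hPconv
  have hslice_pair : ∀ h : ℤ, ∀ x ∈ wSlice w h P, pairing w x = (h : ℚ) := by
    intro h x hx
    exact convexHull_min (fun y hy => hy.2.2)
      (convex_hyperplane (mutaux_pairing_linear w) ((h : ℚ))) hx
  have hUQ : ((⋃ h : ℤ, ⋃ _ : h < 0, G h) ∪
      ⋃ h : ℤ, ⋃ _ : 0 ≤ h, (wSlice w h P + (h : ℚ) • F)) ⊆ Q :=
    subset_convexHull ℚ _
  -- direction 1 : u ∈ P* → T u ∈ Q*
  have hD1 : ∀ u ∈ dualP P, T u ∈ dualP Q := by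
    intro u hu v hv
    have hgen : ∀ x ∈ ((⋃ h : ℤ, ⋃ _ : h < 0, G h) ∪
        ⋃ h : ℤ, ⋃ _ : 0 ≤ h, (wSlice w h P + (h : ℚ) • F)),
        -1 ≤ dpair (T u) x := by
      intro x hx
      rcases hx with hx | hx
      · simp only [Set.mem_iUnion] at hx
        obtain ⟨h, hh, hvG⟩ := hx
        obtain ⟨-, hGsub, hGslice⟩ := hneg h hh
        obtain ⟨f₀, hf₀F, -, hf₀eq⟩ := hmmem u
        have hvf : x + (-(h : ℚ)) • f₀ ∈ wSlice w h P :=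
          hGslice (Set.add_mem_add hvG (Set.smul_mem_smul_set hf₀F))
        have hvP : x + (-(h : ℚ)) • f₀ ∈ P := hslice_sub h hvf
        have hpv : pairing w x = (h : ℚ) := by
          have h1 := hslice_pair h _ hvf
          rw [(mutaux_pairing_linear w).map_add, (mutaux_pairing_linear w).map_smul,
            hF0 f₀ hf₀F] at h1
          simpa using h1
        have hval : dpair (T u) x = dpair u (x + (-(h : ℚ)) • f₀) := by
          rw [hTval, mutaux_dpair_add_right, mutaux_dpair_smul_right, hf₀eq, hpv]
          ring
        rw [hval]
        exact hu _ hvP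
      · simp only [Set.mem_iUnion] at hx
        obtain ⟨h, hh0, hx⟩ := hx
        obtain ⟨s, hs, b, hb, rfl⟩ := hx
        obtain ⟨f, hfF, rfl⟩ := hb
        have hsP := hslice_sub h hs
        have hps := hslice_pair h s hs
        have h1 : dpair (T u) (s + (h : ℚ) • f) = dpair u s + (h : ℚ) * (dpair u f - m u) := by
          rw [hTval, mutaux_dpair_add_right, mutaux_dpair_smul_right,
            (mutaux_pairing_linear w).map_add, (mutaux_pairing_linear w).map_smul,
            hF0 f hfF, hps]
          simp only [smul_eq_mul]
          ring
        rw [h1]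
        have h2 : 0 ≤ (h : ℚ) * (dpair u f - m u) :=
          mul_nonneg (by exact_mod_cast hh0) (sub_nonneg.mpr (hmle u f hfF))
        have h3 := hu s hsP
        linarith
    exact convexHull_min hgen
      (convex_halfSpace_ge (mutaux_dpair_linear (T u)) (-1)) hv
  -- direction 2 : u ∈ Q* → T' u ∈ P*
  have hD2 : ∀ u ∈ dualP Q, T' u ∈ dualP P := by
    intro u hu v hv
    have hext : ∀ x ∈ (convexHull ℚ (SP : Set (Fin n → ℚ))).extremePoints ℚ,
        -1 ≤ dpair (T' u) x := by
      intro x hxext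
      have hxSP : x ∈ SP := by exact_mod_cast extremePoints_convexHull_subset hxext
      have hxlat : IsLatticePt x := hSPlat x hxSP
      have hxP : x ∈ P := hSPeq ▸ subset_convexHull ℚ _ hxSP
      obtain ⟨hz, hhz⟩ := mutaux_pairing_int w x hxlat
      rcases le_or_gt 0 hz with hz0 | hz0
      · obtain ⟨f₀, hf₀F, -, hf₀eq⟩ := hmmem u
        have hxslice : x ∈ wSlice w hz P := subset_convexHull ℚ _ ⟨hxP, hxlat, hhz⟩
        have hmem : x + (hz : ℚ) • f₀ ∈ Q := by
          apply hUQ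
          right
          simp only [Set.mem_iUnion]
          exact ⟨hz, hz0, Set.add_mem_add hxslice (Set.smul_mem_smul_set hf₀F)⟩
        have h1 := hu _ hmem
        have hval : dpair u (x + (hz : ℚ) • f₀) = dpair (T' u) x := by
          rw [hT'val, mutaux_dpair_add_right, mutaux_dpair_smul_right, hf₀eq, hhz]
          ring
        linarith [hval ▸ h1]
      · have hxin : x ∈ G hz + (-(hz : ℚ)) • F := by
          obtain ⟨-, hGsub, -⟩ := hneg hz hz0
          exact hGsub ⟨by rw [hSPeq]; exact hxext, hhz⟩
        obtain ⟨g, hg, b, hb, rfl⟩ := hxin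
        obtain ⟨f, hfF, rfl⟩ := hb
        have hgQ : g ∈ Q := hUQ (Or.inl (by simp only [Set.mem_iUnion]; exact ⟨hz, hz0, hg⟩))
        have h1 := hu g hgQ
        have h2 : m u ≤ dpair u f := hmle u f hfF
        have hpfg : pairing w g = (hz : ℚ) := by
          have h5 := hhz
          rw [(mutaux_pairing_linear w).map_add, (mutaux_pairing_linear w).map_smul,
            hF0 f hfF] at h5
          simpa using h5
        have hval : dpair (T' u) (g + (-(hz : ℚ)) • f)
            = dpair u g + (-(hz : ℚ)) * dpair u f + m u * (hz : ℚ) := by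
          rw [hT'val, mutaux_dpair_add_right, mutaux_dpair_smul_right,
            (mutaux_pairing_linear w).map_add, (mutaux_pairing_linear w).map_smul,
            hF0 f hfF, hpfg]
          simp only [smul_eq_mul]
          ring
        have h4 : (-(hz : ℚ)) * m u ≤ (-(hz : ℚ)) * dpair u f := by
          apply mul_le_mul_of_nonneg_left h2
          have : (0:ℚ) < -(hz:ℚ) := by
            have : (hz:ℚ) < 0 := by exact_mod_cast hz0
            linarith
          linarith
        rw [hval]
        linarith
    refine mutaux_le_on_hull SP (fun y => dpair (T' u) y) (mutaux_dpair_linear _) (-1) hext v ?_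
    rw [← hSPeq]
    exact hv
  -- the dual of the mutation is the image of the dual under T
  have hdual : dualP Q = T '' dualP P := by
    ext u
    constructor
    · intro hu
      exact ⟨T' u, hD2 u hu, hT'T u⟩
    · rintro ⟨x, hx, rfl⟩
      exact hD1 x hx
  -- T as a homeomorphism
  have contm : Continuous m := by
    rw [hm]
    exact mutaux_continuous_inf' SF hSFne (fun s u => dpair u s)
      (fun s => mutaux_continuous_dpair s)
  have contT : Continuous T := by
    rw [hT]
    exact continuous_id.sub (contm.smul continuous_const)
  have contT' : Continuous T' := by
    rw [hT']
    exact continuous_id.add (contm.smul continuous_const)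
  let TH : (Fin n → ℚ) ≃ₜ (Fin n → ℚ) :=
    { toFun := T, invFun := T', left_inv := hTT', right_inv := hT'T,
      continuous_toFun := contT, continuous_invFun := contT' }
  have hThom : ∀ u, T ((k : ℚ) • u) = (k : ℚ) • T u := by
    intro u
    show ((k:ℚ) • u) - m ((k:ℚ) • u) • cw = (k:ℚ) • (u - m u • cw)
    rw [hmhom (k : ℚ) (by positivity) u, smul_sub, mul_smul]
  have hsmulT : T '' ((k : ℚ) • dualP P) = (k : ℚ) • (T '' dualP P) := by
    ext v
    simp only [Set.mem_image, Set.mem_smul_set]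
    constructor
    · rintro ⟨x, ⟨y, hy, rfl⟩, rfl⟩
      exact ⟨T y, ⟨y, hy, rfl⟩, (hThom y).symm⟩
    · rintro ⟨x, ⟨y, hy, rfl⟩, rfl⟩
      exact ⟨(k : ℚ) • y, ⟨y, hy, rfl⟩, hThom y⟩
  have hsetQ : (k : ℚ) • dualP Q = T '' ((k : ℚ) • dualP P) := by
    rw [hdual, hsmulT]
  have hfront : frontier ((k : ℚ) • dualP Q) = T '' frontier ((k : ℚ) • dualP P) := by
    rw [hsetQ]
    exact (TH.image_frontier _).symm
  -- lattice point preservation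
  have hmint : ∀ u, IsLatticePt u → ∃ z : ℤ, m u = (z : ℚ) := by
    intro u hu
    obtain ⟨s, hs, hseq⟩ := Finset.exists_mem_eq_inf' hSFne (fun s => dpair u s)
    obtain ⟨z, hz⟩ := mutaux_dpair_int u s hu (hSFlat s hs)
    refine ⟨z, ?_⟩
    show SF.inf' hSFne (fun s => dpair u s) = (z : ℚ)
    rw [hseq]
    exact hz
  have hTlat : ∀ u, IsLatticePt u → IsLatticePt (T u) := by
    intro u hu i
    obtain ⟨z, hz⟩ := hmint u hu
    obtain ⟨a, ha⟩ := hu i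
    refine ⟨a - z * w i, ?_⟩
    show u i - m u * cw i = _
    rw [hz, ha, hcw]
    push_cast
    ring
  have hT'lat : ∀ u, IsLatticePt u → IsLatticePt (T' u) := by
    intro u hu i
    obtain ⟨z, hz⟩ := hmint u hu
    obtain ⟨a, ha⟩ := hu i
    refine ⟨a + z * w i, ?_⟩
    show u i + m u * cw i = _
    rw [hz, ha, hcw]
    push_cast
    ring
  -- transfer to integer points
  set Φ : (Fin n → ℤ) → (Fin n → ℤ) := fun u => fun i => ⌊T (fun j => (u j : ℚ)) i⌋ with hΦ
  have hcast : ∀ u : Fin n → ℤ, (fun i => ((Φ u) i : ℚ)) = T (fun j => (u j : ℚ)) := by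
    intro u
    have hl : IsLatticePt (T (fun j => (u j : ℚ))) := hTlat _ (fun i => ⟨u i, rfl⟩)
    funext i
    obtain ⟨z, hz⟩ := hl i
    show ((⌊T (fun j => (u j : ℚ)) i⌋ : ℚ)) = _
    rw [hz]
    norm_num
  have hinj : Function.Injective T := fun a b hab => by
    have h1 := congrArg T' hab
    rwa [hTT', hTT'] at h1
  have himg : {u : Fin n → ℤ | (fun i => (u i : ℚ)) ∈ frontier ((k : ℚ) • dualP Q)}
      = Φ '' {u : Fin n → ℤ | (fun i => (u i : ℚ)) ∈ frontier ((k : ℚ) • dualP P)} := by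
    ext v
    constructor
    · intro hv
      have hv' : (fun i => (v i : ℚ)) ∈ T '' frontier ((k : ℚ) • dualP P) := by
        rw [← hfront]
        exact hv
      obtain ⟨x, hx, hxe⟩ := hv'
      have hxl : IsLatticePt x := by
        have hx' : x = T' (fun i => (v i : ℚ)) := by rw [← hxe, hTT']
        rw [hx']
        exact hT'lat _ (fun i => ⟨v i, rfl⟩)
      set u : Fin n → ℤ := fun i => ⌊x i⌋ with hu
      have hux : (fun i => (u i : ℚ)) = x := by
        funext i
        obtain ⟨z, hz⟩ := hxl i
        simp [hu, hz]
      refine ⟨u, ?_, ?_⟩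
      · show (fun i => (u i : ℚ)) ∈ frontier _
        rw [hux]
        exact hx
      · have hc : (fun i => ((Φ u) i : ℚ)) = (fun i => (v i : ℚ)) := by
          rw [hcast, hux, hxe]
        funext i
        exact_mod_cast congrFun hc i
    · rintro ⟨u, hu, rfl⟩
      show (fun i => ((Φ u) i : ℚ)) ∈ frontier ((k : ℚ) • dualP Q)
      rw [hcast, hfront]
      exact ⟨_, hu, rfl⟩
  have hinjΦ : Set.InjOn Φ
      {u : Fin n → ℤ | (fun i => (u i : ℚ)) ∈ frontier ((k : ℚ) • dualP P)} := by
    intro a _ b _ hab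
    have h1 : T (fun j => (a j : ℚ)) = T (fun j => (b j : ℚ)) := by
      rw [← hcast, ← hcast, hab]
    have h2 := hinj h1
    funext i
    exact_mod_cast congrFun h2 i
  rw [himg, Set.ncard_image_of_injOn hinjΦ]
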